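/- Let x_0, …, x_n ∈ ℝ^n be affinely independent with simplex σ = co({x_j}_{j=0}^n). Let g : ℝ^n → ℝ be twice continuously differentiable on an open set containing σ, and let β ≥ 0 satisfy |∂²g/∂x^{(q)}∂x^{(r)}(ξ)| ≤ β for all ξ ∈ σ and all q, r ∈ {1, …, n}. Then for every point x = Σ_{j=0}^n α_j x_j of σ with barycentric coordinates α_j ≥ 0, Σ_j α_j = 1, one has |g(x) − Σ_{j=0}^n α_j g(x_j)| ≤ β · Σ_{j=0}^n α_j c_j. -/

import Mathlib

open Filter Topology Set
open scoped BigOperators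

/-- Second partial derivative `∂²φ/∂x^{(q)}∂x^{(r)}` of a scalar function on ℝⁿ. -/
noncomputable def secondPartial {n : ℕ} (φ : EuclideanSpace ℝ (Fin n) → ℝ) (q r : Fin n)
    (ξ : EuclideanSpace ℝ (Fin n)) : ℝ :=
  fderiv ℝ (fun y => fderiv ℝ φ y (EuclideanSpace.single r 1)) ξ (EuclideanSpace.single q 1)

/-- 1-D second-order Taylor bound: if `f'` is a derivative of `f` on `[0,1]` and
`|f' t - f' 0| ≤ C * t` there, then `|f 1 - f 0 - f' 0| ≤ C / 2`. -/
lemma taylor1d {f f' : ℝ → ℝ} {C : ℝ}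
    (hf : ∀ t ∈ Set.Icc (0:ℝ) 1, HasDerivAt f (f' t) t)
    (hlip : ∀ t ∈ Set.Icc (0:ℝ) 1, |f' t - f' 0| ≤ C * t) :
    |f 1 - f 0 - f' 0| ≤ C / 2 := by
  set F : ℝ → ℝ := fun t => f t - f 0 - t * f' 0 with hFdef
  have hF' : ∀ t ∈ Set.Icc (0:ℝ) 1, HasDerivAt F (f' t - f' 0) t := by
    intro t ht
    have := ((hf t ht).sub (hasDerivAt_const t (f 0))).sub ((hasDerivAt_id t).mul_const (f' 0))
    simp at this
    exact this
  have hB : ∀ t : ℝ, HasDerivAt (fun t : ℝ => C * t ^ 2 / 2) (C * t) t := by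
    intro t
    have := ((hasDerivAt_pow 2 t).const_mul C).div_const 2
    have e : C * (((2:ℕ):ℝ) * t ^ (2 - 1)) / 2 = C * t := by norm_num; ring
    rw [e] at this
    exact this
  have key := image_norm_le_of_norm_deriv_right_le_deriv_boundary
    (f := F) (f' := fun t => f' t - f' 0) (a := 0) (b := 1)
    (fun t ht => (hF' t ht).continuousAt.continuousWithinAt)
    (fun t ht => (hF' t ⟨ht.1, ht.2.le⟩).hasDerivWithinAt)
    (B := fun t => C * t ^ 2 / 2) (B' := fun t => C * t)
    (by simp [hFdef]) hB
    (fun t ht => by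
      have := hlip t ⟨ht.1, ht.2.le⟩
      simpa [Real.norm_eq_abs] using this)
  have h1 := key (Set.mem_Icc.2 ⟨zero_le_one, le_refl 1⟩)
  simpa [hFdef, Real.norm_eq_abs] using h1

/-- CPA interpolation error bound on a simplex (Taylor-type bound). -/
theorem stmt0 (n : ℕ)
    (x : Fin (n + 1) → EuclideanSpace ℝ (Fin n))
    -- affine independence: x₁ − x₀, …, xₙ − x₀ are linearly independent
    (hx : LinearIndependent ℝ (fun j : Fin n => x j.succ - x 0))
    (g : EuclideanSpace ℝ (Fin n) → ℝ)
    -- g is C² on an open set containing the simplex σ = co({x_j})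
    (U : Set (EuclideanSpace ℝ (Fin n))) (hU : IsOpen U)
    (hσU : convexHull ℝ (Set.range x) ⊆ U)
    (hg : ContDiffOn ℝ 2 g U)
    (β : ℝ) (hβ0 : 0 ≤ β)
    (hβ : ∀ ξ ∈ convexHull ℝ (Set.range x), ∀ q r : Fin n, |secondPartial g q r ξ| ≤ β)
    (c : Fin (n + 1) → ℝ)
    (hc : ∀ j, c j = ((n : ℝ) / 2) * ‖x j - x 0‖ *
      ((⨆ k : Fin n, ‖x k.succ - x 0‖) + ‖x j - x 0‖))
    (α : Fin (n + 1) → ℝ) (hα0 : ∀ j, 0 ≤ α j) (hα1 : ∑ j, α j = 1) :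
    |g (∑ j, α j • x j) - ∑ j, α j * g (x j)| ≤ β * ∑ j, α j * c j := by
  clear hx
  set σ : Set (EuclideanSpace ℝ (Fin n)) := convexHull ℝ (Set.range x) with hσdef
  have hσconv : Convex ℝ σ := convex_convexHull ℝ _
  have hmemσ : ∀ j, x j ∈ σ := fun j => subset_convexHull ℝ _ ⟨j, rfl⟩
  -- first and second derivative facts
  have hg1 : ∀ y ∈ U, HasFDerivAt g (fderiv ℝ g y) y := fun y hy =>
    ((hg.contDiffAt (hU.mem_nhds hy)).differentiableAt two_ne_zero).hasFDerivAt
  have hG : ContDiffOn ℝ 1 (fderiv ℝ g) U :=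
    hg.fderiv_of_isOpen hU (by norm_num)
  have hG1 : ∀ y ∈ U, HasFDerivAt (fderiv ℝ g) (fderiv ℝ (fderiv ℝ g) y) y := fun y hy =>
    ((hG.contDiffAt (hU.mem_nhds hy)).differentiableAt one_ne_zero).hasFDerivAt
  set H : EuclideanSpace ℝ (Fin n) → (EuclideanSpace ℝ (Fin n)) →L[ℝ] (EuclideanSpace ℝ (Fin n)) →L[ℝ] ℝ := fun ξ => fderiv ℝ (fderiv ℝ g) ξ with hHdef
  -- identification of secondPartial with H
  have hsp : ∀ ξ ∈ U, ∀ q r : Fin n,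
      secondPartial g q r ξ = H ξ (EuclideanSpace.single q 1) (EuclideanSpace.single r 1) := by
    intro ξ hξ q r
    have hdc : DifferentiableAt ℝ (fderiv ℝ g) ξ := (hG1 ξ hξ).differentiableAt
    have : fderiv ℝ (fun y => fderiv ℝ g y (EuclideanSpace.single r 1)) ξ
        = (fderiv ℝ g ξ).comp (fderiv ℝ (fun _ : EuclideanSpace ℝ (Fin n) => EuclideanSpace.single r 1) ξ)
          + (H ξ).flip (EuclideanSpace.single r 1) :=
      fderiv_clm_apply hdc (differentiableAt_const _)
    rw [secondPartial, this]
    simp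
  -- expansion of vectors in the basis
  have hexp : ∀ v : EuclideanSpace ℝ (Fin n), v = ∑ r, v r • (EuclideanSpace.single r 1 : EuclideanSpace ℝ (Fin n)) := by
    intro v
    ext i
    rw [show (∑ r, v r • (EuclideanSpace.single r 1 : EuclideanSpace ℝ (Fin n))) i
        = ∑ r, (v r • (EuclideanSpace.single r 1 : EuclideanSpace ℝ (Fin n))) i
      from by rw [WithLp.ofLp_sum, Finset.sum_apply]]
    simp [EuclideanSpace.single_apply]
  -- quadratic form bound
  have hquad : ∀ ξ ∈ σ, ∀ v : EuclideanSpace ℝ (Fin n), |H ξ v v| ≤ β * n * ‖v‖ ^ 2 := by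
    intro ξ hξ v
    have hnorm : ‖v‖ ^ 2 = ∑ i, |v i| ^ 2 := by
      rw [EuclideanSpace.norm_eq, Real.sq_sqrt (by positivity)]
      simp [Real.norm_eq_abs]
    have hHvv : H ξ v v = ∑ q, ∑ r, v q * v r *
        (H ξ (EuclideanSpace.single q 1) (EuclideanSpace.single r 1)) := by
      have h1 : ∀ M : (EuclideanSpace ℝ (Fin n)) →L[ℝ] ℝ,
          M v = ∑ r, v r * M (EuclideanSpace.single r 1) := by
        intro M
        conv_lhs => rw [hexp v]
        rw [map_sum]
        exact Finset.sum_congr rfl fun r _ => by rw [map_smul, smul_eq_mul]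
      have h2 : H ξ v = ∑ q, v q • H ξ (EuclideanSpace.single q 1) := by
        conv_lhs => rw [hexp v]
        rw [map_sum]
        exact Finset.sum_congr rfl fun q _ => by rw [map_smul]
      rw [h2, ContinuousLinearMap.sum_apply]
      refine Finset.sum_congr rfl fun q _ => ?_
      rw [ContinuousLinearMap.smul_apply, smul_eq_mul, h1 (H ξ (EuclideanSpace.single q 1)),
        Finset.mul_sum]
      exact Finset.sum_congr rfl fun r _ => by ring
    have habs : |H ξ v v| ≤ ∑ q, ∑ r, |v q| * |v r| * β := by
      rw [hHvv]
      refine (Finset.abs_sum_le_sum_abs _ _).trans ?_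
      refine Finset.sum_le_sum fun q _ => ?_
      refine (Finset.abs_sum_le_sum_abs _ _).trans ?_
      refine Finset.sum_le_sum fun r _ => ?_
      rw [abs_mul, abs_mul]
      have hb := hβ ξ hξ q r
      rw [hsp ξ (hσU hξ) q r] at hb
      exact mul_le_mul_of_nonneg_left hb (by positivity)
    have hsum : ∑ q, ∑ r, |v q| * |v r| * β = β * (∑ q, |v q|) ^ 2 := by
      rw [sq, Finset.sum_mul_sum, Finset.mul_sum]
      refine Finset.sum_congr rfl fun q _ => ?_
      rw [Finset.mul_sum]
      refine Finset.sum_congr rfl fun r _ => ?_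
      ring
    have hcs : (∑ q, |v q|) ^ 2 ≤ (n : ℝ) * ∑ q, |v q| ^ 2 := by
      have := sq_sum_le_card_mul_sum_sq (s := Finset.univ) (f := fun q : Fin n => |v q|)
      simpa using this
    calc |H ξ v v| ≤ β * (∑ q, |v q|) ^ 2 := by rw [← hsum]; exact habs
      _ ≤ β * ((n : ℝ) * ∑ q, |v q| ^ 2) := by
          exact mul_le_mul_of_nonneg_left hcs hβ0
      _ = β * n * ‖v‖ ^ 2 := by rw [hnorm]; ring
  -- Taylor bound at x 0
  have htaylor : ∀ y ∈ σ, |g y - g (x 0) - fderiv ℝ g (x 0) (y - x 0)|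
      ≤ β * n / 2 * ‖y - x 0‖ ^ 2 := by
    intro y hy
    set v : EuclideanSpace ℝ (Fin n) := y - x 0 with hvdef
    set p : ℝ → EuclideanSpace ℝ (Fin n) := fun t => x 0 + t • v with hpdef
    have hp : ∀ t : ℝ, HasDerivAt p v t := by
      intro t
      have : HasDerivAt (fun t : ℝ => t • v) ((1:ℝ) • v) t := (hasDerivAt_id t).smul_const v
      simpa [hpdef] using this.const_add (x 0)
    have hpσ : ∀ t ∈ Set.Icc (0:ℝ) 1, p t ∈ σ := by
      intro t ht
      have : p t = (1 - t) • x 0 + t • y := by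
        simp only [hpdef, hvdef]
        module
      rw [this]
      exact hσconv (hmemσ 0) hy (by linarith [ht.2]) ht.1 (by ring)
    set C : ℝ := β * n * ‖v‖ ^ 2 with hCdef
    have hf : ∀ t ∈ Set.Icc (0:ℝ) 1, HasDerivAt (fun t => g (p t)) (fderiv ℝ g (p t) v) t :=
      fun t ht => (hg1 (p t) (hσU (hpσ t ht))).comp_hasDerivAt t (hp t)
    have hf' : ∀ t ∈ Set.Icc (0:ℝ) 1,
        HasDerivAt (fun t => fderiv ℝ g (p t) v) (H (p t) v v) t := by
      intro t ht
      have hc1 : HasDerivAt (fun t => fderiv ℝ g (p t)) (H (p t) v) t :=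
        (hG1 (p t) (hσU (hpσ t ht))).comp_hasDerivAt t (hp t)
      have := hc1.clm_apply (hasDerivAt_const t v)
      simpa using this
    have hlip : ∀ t ∈ Set.Icc (0:ℝ) 1,
        |fderiv ℝ g (p t) v - fderiv ℝ g (p 0) v| ≤ C * t := by
      intro t ht
      have := Convex.norm_image_sub_le_of_norm_hasDerivWithin_le
        (f := fun t => fderiv ℝ g (p t) v) (f' := fun t => H (p t) v v)
        (s := Set.Icc (0:ℝ) 1) (C := C)
        (fun s hs => (hf' s hs).hasDerivWithinAt)
        (fun s hs => by
          have := hquad (p s) (hpσ s hs) v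
          simpa [Real.norm_eq_abs] using this)
        (convex_Icc 0 1) (Set.mem_Icc.2 ⟨le_refl 0, zero_le_one⟩) ht
      rw [Real.norm_eq_abs, Real.norm_eq_abs, sub_zero, abs_of_nonneg ht.1] at this
      exact this
    have := taylor1d (f := fun t => g (p t)) (f' := fun t => fderiv ℝ g (p t) v) (C := C)
      hf (by
        intro t ht
        have h0 : p 0 = x 0 := by simp [hpdef]
        have := hlip t ht
        simpa [h0] using this)
    have hp1 : p 1 = y := by simp [hpdef, hvdef]
    have hp0 : p 0 = x 0 := by simp [hpdef]
    replace this : |g (p 1) - g (p 0) - fderiv ℝ g (p 0) v| ≤ C / 2 := this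
    rw [hp1, hp0] at this
    calc |g y - g (x 0) - fderiv ℝ g (x 0) v| ≤ C / 2 := this
      _ = β * n / 2 * ‖v‖ ^ 2 := by rw [hCdef]; ring
  -- abbreviations
  set m : ℝ := ⨆ k : Fin n, ‖x k.succ - x 0‖ with hmdef
  have hm0 : 0 ≤ m := Real.iSup_nonneg fun k => norm_nonneg _
  have ham : ∀ j, ‖x j - x 0‖ ≤ m := by
    intro j
    induction j using Fin.cases with
    | zero => simpa using hm0
    | succ k =>
      rw [hmdef]
      exact le_ciSup (Set.Finite.bddAbove
        (Set.finite_range fun k : Fin n => ‖x k.succ - x 0‖)) k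
  set xb : EuclideanSpace ℝ (Fin n) := ∑ j, α j • x j with hxbdef
  have hxbσ : xb ∈ σ :=
    hσconv.sum_mem (fun j _ => hα0 j) hα1 (fun j _ => hmemσ j)
  have hsum : xb - x 0 = ∑ j, α j • (x j - x 0) := by
    have h2 : ∑ j, α j • (x j - x 0) = (∑ j, α j • x j) - ∑ j, α j • x 0 := by
      rw [← Finset.sum_sub_distrib]
      exact Finset.sum_congr rfl fun j _ => smul_sub _ _ _
    rw [h2, ← Finset.sum_smul, hα1, one_smul, hxbdef]
  set D : (EuclideanSpace ℝ (Fin n)) →L[ℝ] ℝ := fderiv ℝ g (x 0) with hDdef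
  have hDsum : D (xb - x 0) = ∑ j, α j * D (x j - x 0) := by
    rw [hsum, map_sum]
    exact Finset.sum_congr rfl fun j _ => by rw [map_smul]; simp
  have hkey : g xb - ∑ j, α j * g (x j) =
      (g xb - g (x 0) - D (xb - x 0)) - ∑ j, α j * (g (x j) - g (x 0) - D (x j - x 0)) := by
    have h1 : ∑ j, α j * (g (x j) - g (x 0) - D (x j - x 0))
        = (∑ j, α j * g (x j)) - g (x 0) - ∑ j, α j * D (x j - x 0) := by
      simp only [mul_sub]
      rw [Finset.sum_sub_distrib, Finset.sum_sub_distrib, ← Finset.sum_mul, hα1, one_mul]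
    rw [h1, hDsum]
    ring
  -- norm estimates
  have hxba : ‖xb - x 0‖ ≤ ∑ j, α j * ‖x j - x 0‖ := by
    rw [hsum]
    refine (norm_sum_le _ _).trans ?_
    refine Finset.sum_le_sum fun j _ => ?_
    rw [norm_smul, Real.norm_eq_abs, abs_of_nonneg (hα0 j)]
  have hA : 0 ≤ ∑ j, α j * ‖x j - x 0‖ :=
    Finset.sum_nonneg fun j _ => mul_nonneg (hα0 j) (norm_nonneg _)
  have hAm : ∑ j, α j * ‖x j - x 0‖ ≤ m := by
    calc ∑ j, α j * ‖x j - x 0‖ ≤ ∑ j, α j * m :=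
          Finset.sum_le_sum fun j _ => mul_le_mul_of_nonneg_left (ham j) (hα0 j)
      _ = m := by rw [← Finset.sum_mul, hα1, one_mul]
  have hbound1 : ‖xb - x 0‖ ^ 2 ≤ (∑ j, α j * ‖x j - x 0‖) * m := by
    calc ‖xb - x 0‖ ^ 2 ≤ (∑ j, α j * ‖x j - x 0‖) ^ 2 :=
          pow_le_pow_left₀ (norm_nonneg _) hxba 2
      _ = (∑ j, α j * ‖x j - x 0‖) * (∑ j, α j * ‖x j - x 0‖) := sq _
      _ ≤ (∑ j, α j * ‖x j - x 0‖) * m := mul_le_mul_of_nonneg_left hAm hA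
  have hβn2 : 0 ≤ β * (n : ℝ) / 2 := by positivity
  have hS : |∑ j, α j * (g (x j) - g (x 0) - D (x j - x 0))|
      ≤ ∑ j, α j * (β * n / 2 * ‖x j - x 0‖ ^ 2) := by
    refine (Finset.abs_sum_le_sum_abs _ _).trans ?_
    refine Finset.sum_le_sum fun j _ => ?_
    rw [abs_mul, abs_of_nonneg (hα0 j)]
    exact mul_le_mul_of_nonneg_left (htaylor (x j) (hmemσ j)) (hα0 j)
  have hrhs : β * ∑ j, α j * c j
      = β * (n : ℝ) / 2 * ((∑ j, α j * ‖x j - x 0‖) * m)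
        + ∑ j, α j * (β * (n : ℝ) / 2 * ‖x j - x 0‖ ^ 2) := by
    simp only [hc]
    have hterm : ∀ j, β * (α j * ((n : ℝ) / 2 * ‖x j - x 0‖ * (m + ‖x j - x 0‖)))
        = β * (n : ℝ) / 2 * (α j * ‖x j - x 0‖ * m)
          + α j * (β * (n : ℝ) / 2 * ‖x j - x 0‖ ^ 2) := fun j => by ring
    rw [Finset.mul_sum]
    simp only [hterm]
    rw [Finset.sum_add_distrib]
    congr 1
    rw [← Finset.mul_sum, Finset.sum_mul]
  calc |g xb - ∑ j, α j * g (x j)|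
      = |(g xb - g (x 0) - D (xb - x 0))
          - ∑ j, α j * (g (x j) - g (x 0) - D (x j - x 0))| := by rw [hkey]
    _ ≤ |g xb - g (x 0) - D (xb - x 0)|
          + |∑ j, α j * (g (x j) - g (x 0) - D (x j - x 0))| := abs_sub _ _
    _ ≤ β * n / 2 * ‖xb - x 0‖ ^ 2 + ∑ j, α j * (β * n / 2 * ‖x j - x 0‖ ^ 2) :=
          add_le_add (htaylor xb hxbσ) hS
    _ ≤ β * (n : ℝ) / 2 * ((∑ j, α j * ‖x j - x 0‖) * m)
          + ∑ j, α j * (β * (n : ℝ) / 2 * ‖x j - x 0‖ ^ 2) := by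
          gcongr
    _ = β * ∑ j, α j * c j := hrhs.symm
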